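/- Let r > 0 and n ≥ 1. Let Z be a compact (r,n)-stacked space over X_1,…,X_n with pieces Z_1,…,Z_n, and W a compact (r,n)-stacked space over Y_1,…,Y_n with pieces W_1,…,W_n, where all X_k and Y_k are nonempty compact metric spaces of diameter at most r. Let R be a correspondence between Z and W with distortion dis(R) < 2r. Then for every k ∈ {1,…,n} one has R[Z_k] ⊆ W_k and R⁻¹[W_k] ⊆ Z_k; consequently R_k = R ∩ (Z_k × W_k) is a correspondence between Z_k and W_k with dis(R_k) ≤ dis(R), and hence dis(R) ≥ 2·d_GH(X_k, Y_k) for every k. -/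
import Mathlib


open GromovHausdorff

universe u v w

/-- `Z` (with two distinguished points `p true = p¹` and `p false = p⁻¹`, and pieces
`P 0, …, P (n-1)`, where `P k` plays the role of `Z_{k+1}`) is an `(r,n)`-stacked space
over the nonempty compact metric spaces `X 0, …, X (n-1)` (each of diameter at most `r`):
* `dist p¹ p⁻¹ = 3r`;
* the pieces are pairwise disjoint and do not contain `p¹`, `p⁻¹`;
* `{p¹, p⁻¹}` together with the pieces cover `Z`;
* the piece `P k` with the induced metric is isometric to `X k`;
* `dist (p^s) z = 5r(k+1)` for every `z ∈ P k` and both `s`;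
* `dist z w = 5r|k - l|` for `z ∈ P k`, `w ∈ P l` with `k ≠ l`. -/
def IsStackedSpace (r : ℝ) {n : ℕ} (X : Fin n → Type u) [∀ k, MetricSpace (X k)]
    (Z : Type v) [MetricSpace Z] (p : Bool → Z) (P : Fin n → Set Z) : Prop :=
  dist (p true) (p false) = 3 * r ∧
  (Pairwise fun k l : Fin n => Disjoint (P k) (P l)) ∧
  (∀ (k : Fin n) (s : Bool), p s ∉ P k) ∧
  ({p true, p false} ∪ ⋃ k, P k) = Set.univ ∧
  (∀ k : Fin n, Nonempty (X k ≃ᵢ (P k : Set Z))) ∧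
  (∀ (k : Fin n) (s : Bool), ∀ z ∈ P k, dist (p s) z = 5 * r * ((k : ℕ) + 1)) ∧
  (∀ k l : Fin n, k ≠ l → ∀ z ∈ P k, ∀ w ∈ P l,
    dist z w = 5 * r * |((k : ℕ) : ℝ) - ((l : ℕ) : ℝ)|)

/-- `R ⊆ Z × W` is a correspondence: both projections are surjective onto `Z` and `W`. -/
def IsCorrespondence {Z : Type v} {W : Type w} (R : Set (Z × W)) : Prop :=
  (∀ z : Z, ∃ w : W, (z, w) ∈ R) ∧ (∀ w : W, ∃ z : Z, (z, w) ∈ R)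

/-- The distortion of a relation `R ⊆ Z × W`:
`dis R = sup {|d_Z(x, ξ) - d_W(y, η)| : (x, y), (ξ, η) ∈ R}`. -/
noncomputable def distortion {Z : Type v} {W : Type w} [MetricSpace Z] [MetricSpace W]
    (R : Set (Z × W)) : ℝ :=
  sSup {t : ℝ | ∃ a ∈ R, ∃ b ∈ R, t = |dist a.1 b.1 - dist a.2 b.2|}

private lemma one_le_abs_natCast_sub {a b : ℕ} (h : a ≠ b) : 1 ≤ |(a : ℝ) - (b : ℝ)| := by
  have h1 : ((a : ℝ) - b) = ((a - b : ℤ) : ℝ) := by push_cast; ring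
  rw [h1, ← Int.cast_abs]
  have : (1 : ℤ) ≤ |(a : ℤ) - b| := Int.one_le_abs (sub_ne_zero.2 (by exact_mod_cast h))
  exact_mod_cast this

private lemma aux_mapsto {Z : Type*} {W : Type*} [MetricSpace Z] [MetricSpace W]
    {r : ℝ} (hr : 0 < r) {n : ℕ}
    {p : Bool → Z} {P : Fin n → Set Z} {q : Bool → W} {Q : Fin n → Set W}
    {R : Set (Z × W)}
    (hZ3 : dist (p true) (p false) = 3 * r)
    (hZdistP : ∀ (k : Fin n) (s : Bool), ∀ z ∈ P k, dist (p s) z = 5 * r * ((k : ℕ) + 1))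
    (hWcover : ∀ w : W, (∃ s, w = q s) ∨ ∃ l, w ∈ Q l)
    (hW3 : ∀ s s' : Bool, dist (q s) (q s') ≤ 3 * r)
    (hWdistQ : ∀ (l : Fin n) (s : Bool), ∀ w ∈ Q l, dist (q s) w = 5 * r * ((l : ℕ) + 1))
    (hWdiam : ∀ l : Fin n, ∀ w ∈ Q l, ∀ w' ∈ Q l, dist w w' ≤ r)
    (hWdistQQ : ∀ l m : Fin n, l ≠ m → ∀ w ∈ Q l, ∀ w' ∈ Q m,
      dist w w' = 5 * r * |((l : ℕ) : ℝ) - ((m : ℕ) : ℝ)|)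
    (hR1 : ∀ z : Z, ∃ w, (z, w) ∈ R)
    (H : ∀ a ∈ R, ∀ b ∈ R, |dist a.1 b.1 - dist a.2 b.2| < 2 * r) :
    ∀ k : Fin n, ∀ z ∈ P k, ∀ w, (z, w) ∈ R → w ∈ Q k := by
  have claimA : ∀ (s : Bool) (w : W), (p s, w) ∈ R → ∃ s', w = q s' := by
    intro s w hw
    obtain ⟨w', hw'⟩ := hR1 (p (!s))
    have hd : dist (p s) (p (!s)) = 3 * r := by
      cases s
      · rw [Bool.not_false, dist_comm]; exact hZ3
      · rw [Bool.not_true]; exact hZ3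
    have h : |dist (p s) (p (!s)) - dist w w'| < 2 * r := H _ hw _ hw'
    rw [hd, abs_sub_lt_iff] at h
    rcases hWcover w with hqs | ⟨l, hl⟩
    · exact hqs
    exfalso
    rcases hWcover w' with ⟨s0, rfl⟩ | ⟨m, hm⟩
    · have hd1 : dist w (q s0) = 5 * r * ((l : ℕ) + 1) := by
        rw [dist_comm]; exact hWdistQ l s0 w hl
      have h0 : (0:ℝ) ≤ ((l:ℕ):ℝ) := Nat.cast_nonneg _
      nlinarith [h.2, mul_nonneg hr.le h0]
    · by_cases hlm : l = m
      · subst hlm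
        have := hWdiam l w hl w' hm
        linarith [h.1]
      · have hd2 := hWdistQQ l m hlm w hl w' hm
        have h1 := one_le_abs_natCast_sub (fun e => hlm (Fin.ext e))
        nlinarith [h.2, mul_le_mul_of_nonneg_left h1 hr.le]
  intro k z hz w hw
  obtain ⟨w₁, hw₁⟩ := hR1 (p true)
  obtain ⟨s, rfl⟩ := claimA true w₁ hw₁
  have h : |dist (p true) z - dist (q s) w| < 2 * r := H _ hw₁ _ hw
  rw [hZdistP k true z hz, abs_sub_lt_iff] at h
  have hk0 : (0:ℝ) ≤ ((k:ℕ):ℝ) := Nat.cast_nonneg _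
  rcases hWcover w with ⟨s', rfl⟩ | ⟨l, hl⟩
  · exfalso
    have := hW3 s s'
    nlinarith [h.1, mul_nonneg hr.le hk0]
  · have hd2 := hWdistQ l s w hl
    rw [hd2] at h
    by_cases hlk : l = k
    · subst hlk; exact hl
    · exfalso
      have h1 := one_le_abs_natCast_sub (fun e => hlk (Fin.ext e))
      rcases abs_cases (((l:ℕ):ℝ) - ((k:ℕ):ℝ)) with ⟨he, _⟩ | ⟨he, _⟩ <;>
        rw [he] at h1 <;>
        nlinarith [h.1, h.2, mul_le_mul_of_nonneg_left h1 hr.le]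

private lemma ghDist_le_half_of_corr {A : Type*} {B : Type*}
    [MetricSpace A] [CompactSpace A] [Nonempty A]
    [MetricSpace B] [CompactSpace B] [Nonempty B]
    (S : Set (A × B)) (hS : IsCorrespondence S) {D : ℝ}
    (hD : ∀ a ∈ S, ∀ b ∈ S, |dist a.1 b.1 - dist a.2 b.2| ≤ D) :
    ghDist A B ≤ D / 2 := by
  obtain ⟨a0, b0, hab0⟩ : ∃ a b, (a, b) ∈ S := by
    obtain ⟨w, hw⟩ := hS.1 (Classical.arbitrary A); exact ⟨_, _, hw⟩
  have hD0 : 0 ≤ D := by simpa using hD _ hab0 _ hab0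
  refine le_of_forall_pos_le_add fun δ δ0 => ?_
  have ε0 : 0 < D / 2 + δ := by linarith
  haveI : Nonempty S := ⟨⟨_, hab0⟩⟩
  letI M : MetricSpace (A ⊕ B) :=
    Metric.glueMetricApprox (fun x : S => x.1.1) (fun x : S => x.1.2) (D / 2 + δ) ε0
      (fun x y => by
        have := hD _ x.2 _ y.2
        have h2 : |dist x.1.1 y.1.1 - dist x.1.2 y.1.2| ≤ 2 * (D / 2 + δ) := by linarith
        exact h2)
  have Il : Isometry (Sum.inl : A → A ⊕ B) := Isometry.of_dist_eq fun x y => rfl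
  have Ir : Isometry (Sum.inr : B → A ⊕ B) := Isometry.of_dist_eq fun x y => rfl
  have hGH := ghDist_le_hausdorffDist Il Ir
  have key : ∀ a b, (a, b) ∈ S → dist (Sum.inl a : A ⊕ B) (Sum.inr b) = D / 2 + δ :=
    fun a b h =>
      Metric.glueDist_glued_points (Z := S) (fun x : S => x.1.1) (fun x : S => x.1.2)
        (D / 2 + δ) ⟨(a, b), h⟩
  have hHD : Metric.hausdorffDist (Set.range (Sum.inl : A → A ⊕ B))
      (Set.range (Sum.inr : B → A ⊕ B)) ≤ D / 2 + δ := by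
    apply Metric.hausdorffDist_le_of_mem_dist ε0.le
    · rintro _ ⟨a, rfl⟩
      obtain ⟨b, hb⟩ := hS.1 a
      exact ⟨Sum.inr b, Set.mem_range_self _, (key a b hb).le⟩
    · rintro _ ⟨b, rfl⟩
      obtain ⟨a, ha⟩ := hS.2 b
      exact ⟨Sum.inl a, Set.mem_range_self _, by rw [dist_comm]; exact (key a b ha).le⟩
  linarith [hGH.trans hHD]
/-- Let `Z`, `W` be compact `(r,n)`-stacked spaces over the `X k` and
`Y k`, with pieces `P k` and `Q k` respectively, and let `R` be a correspondence between
`Z` and `W` with `dis R < 2r`. Then for every `k`: `R[P k] ⊆ Q k` and `R⁻¹[Q k] ⊆ P k`;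
consequently `R_k = R ∩ (P k × Q k)` (viewed as a relation between the subspaces
`P k` and `Q k`) is a correspondence with `dis R_k ≤ dis R`, and hence
`dis R ≥ 2 d_GH(X k, Y k)`. -/
theorem stackedSpace_corr_pieces (r : ℝ) (hr : 0 < r) (n : ℕ) (hn : 1 ≤ n)
    (X Y : Fin n → Type u)
    [∀ k, MetricSpace (X k)] [∀ k, CompactSpace (X k)] [∀ k, Nonempty (X k)]
    [∀ k, MetricSpace (Y k)] [∀ k, CompactSpace (Y k)] [∀ k, Nonempty (Y k)]
    (hdX : ∀ k, Metric.diam (Set.univ : Set (X k)) ≤ r)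
    (hdY : ∀ k, Metric.diam (Set.univ : Set (Y k)) ≤ r)
    (Z : Type v) [MetricSpace Z] [CompactSpace Z]
    (W : Type w) [MetricSpace W] [CompactSpace W]
    (p : Bool → Z) (P : Fin n → Set Z) (hZ : IsStackedSpace r X Z p P)
    (q : Bool → W) (Q : Fin n → Set W) (hW : IsStackedSpace r Y W q Q)
    (R : Set (Z × W)) (hR : IsCorrespondence R) (hdis : distortion R < 2 * r) :
    ∀ k : Fin n,
      {w : W | ∃ z ∈ P k, (z, w) ∈ R} ⊆ Q k ∧
      {z : Z | ∃ w ∈ Q k, (z, w) ∈ R} ⊆ P k ∧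
      IsCorrespondence {a : ↥(P k) × ↥(Q k) | ((a.1 : Z), (a.2 : W)) ∈ R} ∧
      distortion {a : ↥(P k) × ↥(Q k) | ((a.1 : Z), (a.2 : W)) ∈ R}
        ≤ distortion R ∧
      2 * ghDist (X k) (Y k) ≤ distortion R := by
  obtain ⟨hZ3, hZdisj, hZnot, hZcover, hZiso, hZdistP, hZdistPP⟩ := hZ
  obtain ⟨hW3, hWdisj, hWnot, hWcover, hWiso, hWdistQ, hWdistQQ⟩ := hW
  have h3r : (0:ℝ) ≤ 3 * r := by linarith
  have hZclass : ∀ z : Z, (∃ s, z = p s) ∨ ∃ k, z ∈ P k := by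
    intro z
    have hz : z ∈ ({p true, p false} ∪ ⋃ k, P k) := by rw [hZcover]; trivial
    simp only [Set.mem_union, Set.mem_insert_iff, Set.mem_singleton_iff, Set.mem_iUnion] at hz
    rcases hz with (h | h) | ⟨k, h⟩
    · exact Or.inl ⟨true, h⟩
    · exact Or.inl ⟨false, h⟩
    · exact Or.inr ⟨k, h⟩
  have hWclass : ∀ w : W, (∃ s, w = q s) ∨ ∃ l, w ∈ Q l := by
    intro z
    have hz : z ∈ ({q true, q false} ∪ ⋃ k, Q k) := by rw [hWcover]; trivial
    simp only [Set.mem_union, Set.mem_insert_iff, Set.mem_singleton_iff, Set.mem_iUnion] at hz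
    rcases hz with (h | h) | ⟨k, h⟩
    · exact Or.inl ⟨true, h⟩
    · exact Or.inl ⟨false, h⟩
    · exact Or.inr ⟨k, h⟩
  have hZ3' : ∀ s s' : Bool, dist (p s) (p s') ≤ 3 * r := by
    intro s s'
    cases s <;> cases s'
    · rw [dist_self]; exact h3r
    · rw [dist_comm]; exact hZ3.le
    · exact hZ3.le
    · rw [dist_self]; exact h3r
  have hW3' : ∀ s s' : Bool, dist (q s) (q s') ≤ 3 * r := by
    intro s s'
    cases s <;> cases s'
    · rw [dist_self]; exact h3r
    · rw [dist_comm]; exact hW3.le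
    · exact hW3.le
    · rw [dist_self]; exact h3r
  have hPdiam : ∀ k : Fin n, ∀ z ∈ P k, ∀ z' ∈ P k, dist z z' ≤ r := by
    intro k z hz z' hz'
    obtain ⟨e⟩ := hZiso k
    have he := e.symm.dist_eq ⟨z, hz⟩ ⟨z', hz'⟩
    rw [Subtype.dist_eq] at he
    rw [← he]
    exact le_trans (Metric.dist_le_diam_of_mem Metric.isBounded_of_compactSpace
      (Set.mem_univ _) (Set.mem_univ _)) (hdX k)
  have hQdiam : ∀ k : Fin n, ∀ w ∈ Q k, ∀ w' ∈ Q k, dist w w' ≤ r := by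
    intro k z hz z' hz'
    obtain ⟨e⟩ := hWiso k
    have he := e.symm.dist_eq ⟨z, hz⟩ ⟨z', hz'⟩
    rw [Subtype.dist_eq] at he
    rw [← he]
    exact le_trans (Metric.dist_le_diam_of_mem Metric.isBounded_of_compactSpace
      (Set.mem_univ _) (Set.mem_univ _)) (hdY k)
  set T := {t : ℝ | ∃ a ∈ R, ∃ b ∈ R, t = |dist a.1 b.1 - dist a.2 b.2|} with hT
  have hTbdd : BddAbove T := by
    refine ⟨Metric.diam (Set.univ : Set Z) + Metric.diam (Set.univ : Set W), ?_⟩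
    rintro t ⟨a, ha, b, hb, rfl⟩
    have h1 : dist a.1 b.1 ≤ Metric.diam (Set.univ : Set Z) :=
      Metric.dist_le_diam_of_mem Metric.isBounded_of_compactSpace (Set.mem_univ _) (Set.mem_univ _)
    have h2 : dist a.2 b.2 ≤ Metric.diam (Set.univ : Set W) :=
      Metric.dist_le_diam_of_mem Metric.isBounded_of_compactSpace (Set.mem_univ _) (Set.mem_univ _)
    have h3 := dist_nonneg (x := a.1) (y := b.1)
    have h4 := dist_nonneg (x := a.2) (y := b.2)
    rw [abs_sub_le_iff]
    constructor <;> linarith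
  have hdis' : sSup T < 2 * r := hdis
  have H : ∀ a ∈ R, ∀ b ∈ R, |dist a.1 b.1 - dist a.2 b.2| < 2 * r := fun a ha b hb =>
    lt_of_le_of_lt (le_csSup hTbdd ⟨a, ha, b, hb, rfl⟩) hdis'
  set R' : Set (W × Z) := {a : W × Z | (a.2, a.1) ∈ R} with hR'
  have hR1' : ∀ w : W, ∃ z, (w, z) ∈ R' := fun w => hR.2 w
  have H' : ∀ a ∈ R', ∀ b ∈ R', |dist a.1 b.1 - dist a.2 b.2| < 2 * r := by
    intro a ha b hb
    rw [abs_sub_comm]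
    exact H (a.2, a.1) ha (b.2, b.1) hb
  have fwd : ∀ k : Fin n, ∀ z ∈ P k, ∀ w, (z, w) ∈ R → w ∈ Q k :=
    aux_mapsto hr hZ3 hZdistP hWclass hW3' hWdistQ hQdiam hWdistQQ hR.1 H
  have bwd : ∀ k : Fin n, ∀ w ∈ Q k, ∀ z, (w, z) ∈ R' → z ∈ P k :=
    aux_mapsto hr hW3 hWdistQ hZclass hZ3' hZdistP hPdiam hZdistPP hR1' H'
  intro k
  obtain ⟨eX⟩ := hZiso k
  obtain ⟨eY⟩ := hWiso k
  haveI : CompactSpace ↥(P k) := eX.toHomeomorph.compactSpace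
  haveI : Nonempty ↥(P k) := ⟨eX (Classical.arbitrary _)⟩
  haveI : CompactSpace ↥(Q k) := eY.toHomeomorph.compactSpace
  haveI : Nonempty ↥(Q k) := ⟨eY (Classical.arbitrary _)⟩
  have sub1 : {w : W | ∃ z ∈ P k, (z, w) ∈ R} ⊆ Q k := by
    rintro w ⟨z, hz, hzw⟩; exact fwd k z hz w hzw
  have sub2 : {z : Z | ∃ w ∈ Q k, (z, w) ∈ R} ⊆ P k := by
    rintro z ⟨w, hw, hzw⟩; exact bwd k w hw z hzw
  have corr : IsCorrespondence {a : ↥(P k) × ↥(Q k) | ((a.1 : Z), (a.2 : W)) ∈ R} := by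
    constructor
    · intro z
      obtain ⟨w, hw⟩ := hR.1 (z : Z)
      exact ⟨⟨w, sub1 ⟨z, z.2, hw⟩⟩, hw⟩
    · intro w
      obtain ⟨z, hz⟩ := hR.2 (w : W)
      exact ⟨⟨z, sub2 ⟨w, w.2, hz⟩⟩, hz⟩
  have hTk_sub : {t : ℝ | ∃ a ∈ {a : ↥(P k) × ↥(Q k) | ((a.1 : Z), (a.2 : W)) ∈ R},
      ∃ b ∈ {a : ↥(P k) × ↥(Q k) | ((a.1 : Z), (a.2 : W)) ∈ R},
      t = |dist a.1 b.1 - dist a.2 b.2|} ⊆ T := by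
    rintro t ⟨a, ha, b, hb, rfl⟩
    exact ⟨((a.1 : Z), (a.2 : W)), ha, ((b.1 : Z), (b.2 : W)), hb, by
      rw [Subtype.dist_eq a.1 b.1, Subtype.dist_eq a.2 b.2]⟩
  have neTk : {t : ℝ | ∃ a ∈ {a : ↥(P k) × ↥(Q k) | ((a.1 : Z), (a.2 : W)) ∈ R},
      ∃ b ∈ {a : ↥(P k) × ↥(Q k) | ((a.1 : Z), (a.2 : W)) ∈ R},
      t = |dist a.1 b.1 - dist a.2 b.2|}.Nonempty := by
    obtain ⟨z⟩ := (inferInstance : Nonempty ↥(P k))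
    obtain ⟨w, hw⟩ := corr.1 z
    exact ⟨_, ⟨(z, w), hw, (z, w), hw, rfl⟩⟩
  have hdk : distortion {a : ↥(P k) × ↥(Q k) | ((a.1 : Z), (a.2 : W)) ∈ R} ≤ distortion R :=
    csSup_le_csSup hTbdd neTk hTk_sub
  have hgh : ghDist ↥(P k) ↥(Q k) ≤ distortion R / 2 := by
    apply ghDist_le_half_of_corr _ corr
    intro a ha b hb
    exact le_csSup hTbdd (hTk_sub ⟨a, ha, b, hb, rfl⟩)
  have heq : ghDist (X k) (Y k) = ghDist ↥(P k) ↥(Q k) := by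
    have h1 : toGHSpace (X k) = toGHSpace ↥(P k) :=
      toGHSpace_eq_toGHSpace_iff_isometryEquiv.2 ⟨eX⟩
    have h2 : toGHSpace (Y k) = toGHSpace ↥(Q k) :=
      toGHSpace_eq_toGHSpace_iff_isometryEquiv.2 ⟨eY⟩
    unfold ghDist
    rw [h1, h2]
  exact ⟨sub1, sub2, corr, hdk, by rw [heq]; linarith⟩
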